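/- (Core of Proposition 2: no simultaneous annihilator.) Suppose β̂ > β > 0, c_P > 0, c_V > 0, and let z = (x_C, x_S, x_R) ∈ ℝ³ satisfy x_S > 0, x_R ≥ 0 and 0 < 1 − x_S − x_R. Then there is no vector λ = (λ_C, λ_S, λ_R) ∈ ℝ³ with λ_C = 1 such that ⟨λ, g_P(z)⟩ = 0, ⟨λ, g_V(z)⟩ = 0, and ⟨λ, [g_P, g_V](z)⟩ = 0 simultaneously, where ⟨·,·⟩ is the standard inner product on ℝ³. -/

import Mathlib

noncomputable section

/-- Drift vector field of the Mayer-form SIRI dynamics, `z = (x_C, x_S, x_R)`. -/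
def fVec (cP cI γ : ℝ) (z : ℝ × ℝ × ℝ) : ℝ × ℝ × ℝ :=
  (cP * (z.2.1 + z.2.2) + cI * (1 - z.2.1 - z.2.2), 0, γ * (1 - z.2.1 - z.2.2))

/-- Control vector field for the protection input. -/
def gPVec (β βh cP : ℝ) (z : ℝ × ℝ × ℝ) : ℝ × ℝ × ℝ :=
  (-(cP * (z.2.1 + z.2.2)), -(β * z.2.1 * (1 - z.2.1 - z.2.2)),
    -(βh * z.2.2 * (1 - z.2.1 - z.2.2)))

/-- Control vector field for the vaccination input. -/
def gVVec (cV : ℝ) (z : ℝ × ℝ × ℝ) : ℝ × ℝ × ℝ := (cV * z.2.1, -z.2.1, z.2.1)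

/-- Lie bracket of two vector fields on `ℝ³`:
`[X, Y](z) = DY(z) X(z) − DX(z) Y(z)`, where `D` is the Fréchet derivative. -/
def lieBr (X Y : ℝ × ℝ × ℝ → ℝ × ℝ × ℝ) (z : ℝ × ℝ × ℝ) : ℝ × ℝ × ℝ :=
  fderiv ℝ Y z (X z) - fderiv ℝ X z (Y z)

/-- Standard inner product on `ℝ³ = ℝ × ℝ × ℝ`. -/
def dot3 (a b : ℝ × ℝ × ℝ) : ℝ := a.1 * b.1 + a.2.1 * b.2.1 + a.2.2 * b.2.2

lemma gV_fderiv (cV : ℝ) (z v : ℝ × ℝ × ℝ) :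
    fderiv ℝ (gVVec cV) z v = (cV * v.2.1, -v.2.1, v.2.1) := by
  have hs : HasFDerivAt (fun z : ℝ × ℝ × ℝ => z.2.1)
      ((ContinuousLinearMap.fst ℝ ℝ ℝ).comp (ContinuousLinearMap.snd ℝ ℝ (ℝ × ℝ))) z :=
    (hasFDerivAt_snd).fst
  have H : HasFDerivAt (gVVec cV) _ z :=
    (HasFDerivAt.prodMk (hs.const_mul cV) (HasFDerivAt.prodMk hs.neg hs))
  rw [H.fderiv]
  simp

lemma gP_fderiv (β βh cP : ℝ) (z v : ℝ × ℝ × ℝ) :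
    fderiv ℝ (gPVec β βh cP) z v =
      (-(cP * (v.2.1 + v.2.2)),
       -(β * v.2.1 * (1 - z.2.1 - z.2.2) + β * z.2.1 * (-v.2.1 - v.2.2)),
       -(βh * v.2.2 * (1 - z.2.1 - z.2.2) + βh * z.2.2 * (-v.2.1 - v.2.2))) := by
  have hs : HasFDerivAt (fun z : ℝ × ℝ × ℝ => z.2.1)
      ((ContinuousLinearMap.fst ℝ ℝ ℝ).comp (ContinuousLinearMap.snd ℝ ℝ (ℝ × ℝ))) z :=
    (hasFDerivAt_snd).fst
  have hr : HasFDerivAt (fun z : ℝ × ℝ × ℝ => z.2.2)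
      ((ContinuousLinearMap.snd ℝ ℝ ℝ).comp (ContinuousLinearMap.snd ℝ ℝ (ℝ × ℝ))) z :=
    (hasFDerivAt_snd).snd
  have hI : HasFDerivAt (fun z : ℝ × ℝ × ℝ => 1 - z.2.1 - z.2.2) _ z :=
    ((hasFDerivAt_const (1:ℝ) z).sub hs).sub hr
  have H : HasFDerivAt (gPVec β βh cP) _ z :=
    (HasFDerivAt.prodMk ((hs.add hr).const_mul cP).neg
      (HasFDerivAt.prodMk (HasFDerivAt.mul (hs.const_mul β) hI).neg (HasFDerivAt.mul (hr.const_mul βh) hI).neg))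
  rw [H.fderiv]
  simp
  ring_nf
  simp

/-- core of Proposition 2: no co-state vector with unit cost
component can simultaneously annihilate `g_P(z)`, `g_V(z)` and `[g_P, g_V](z)`. -/
theorem siri_no_simultaneous_annihilator
    (β βh γ cP cV cI : ℝ)
    (hβ : 0 < β) (hβhβ : β < βh) (hγ : 0 < γ)
    (hcP : 0 < cP) (hcV : 0 < cV) (hcI : 0 < cI)
    (z : ℝ × ℝ × ℝ) (hxS : 0 < z.2.1) (hxR : 0 ≤ z.2.2)
    (hxI : 0 < 1 - z.2.1 - z.2.2) :
    ¬ ∃ l : ℝ × ℝ × ℝ, l.1 = 1 ∧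
        dot3 l (gPVec β βh cP z) = 0 ∧
        dot3 l (gVVec cV z) = 0 ∧
        dot3 l (lieBr (gPVec β βh cP) (gVVec cV) z) = 0 := by
  rintro ⟨l, hl1, hP, hV, hB⟩
  set xS := z.2.1
  set xR := z.2.2
  set I := 1 - xS - xR with hI
  have hBr : lieBr (gPVec β βh cP) (gVVec cV) z =
      (-(β * cV * xS * I), 0, (βh - β) * xS * I) := by
    unfold lieBr
    rw [gV_fderiv, gP_fderiv]
    simp only [gPVec, gVVec, Prod.mk_sub_mk]
    refine Prod.ext ?_ (Prod.ext ?_ ?_) <;> simp <;> ring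
  rw [hBr] at hB
  simp only [dot3, gPVec, gVVec, hl1] at hP hV hB
  -- from hB : λR = β cV / (βh - β) > 0 ; from hV : λS = cV + λR > 0
  have hR : l.2.2 * ((βh - β) * I) = β * cV * I := by nlinarith [hB, hxS]
  have hlR : 0 < l.2.2 := by
    have h1 : l.2.2 * (βh - β) = β * cV := by
      have h2 : (l.2.2 * (βh - β)) * I = (β * cV) * I := by ring_nf; ring_nf at hR; linarith
      exact mul_right_cancel₀ (ne_of_gt hxI) h2
    nlinarith
  have hlS : 0 < l.2.1 := by nlinarith [hV, hxS]
  have hβh : (0:ℝ) < βh := lt_trans hβ hβhβ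
  nlinarith [hP, mul_pos hcP hxS, mul_nonneg hcP.le hxR,
    mul_pos hlS (mul_pos (mul_pos hβ hxS) hxI),
    mul_nonneg hlR.le (mul_nonneg (mul_nonneg hβh.le hxR) hxI.le)]
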